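/- Let M ≥ 2 be an integer, h = 1/M, τ > 0, x_i = i·h, D_i = x_i(1 − x_i). Let f^n, n = 0, 1, 2, …, satisfy the full Scheme 3: with fluxes j^{n+1}_{i+1/2} = −(D_{i+1} f^{n+1}_{i+1} − D_i f^{n+1}_i)/h, the updates are f^{n+1}_i = f^n_i − (τ/h)(j^{n+1}_{i+1/2} − j^{n+1}_{i−1/2}) for i = 1,…,M−1, f^{n+1}_0 = f^n_0 − (2τ/h) j^{n+1}_{1/2}, and f^{n+1}_M = f^n_M + (2τ/h) j^{n+1}_{M−1/2}. Let P₀ = (h/2)f^0_0 + (h/2)f^0_M + Σ_{i=1}^{M−1} f^0_i h and E₀ = (h/2)x_M f^0_M + Σ_{i=1}^{M−1} x_i f^0_i h. Then as n → ∞: f^n_i → 0 for each i = 1,…,M−1, (h/2)f^n_M → E₀, and (h/2)f^n_0 → P₀ − E₀. -/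

import Mathlib

open Filter Topology Finset

lemma abel_energy (G : ℕ → ℝ) (m : ℕ) :
    ∑ i ∈ Finset.Ico 1 (m+1), G i * (G (i+1) - 2*G i + G (i-1))
      = -∑ i ∈ Finset.range (m+1), (G (i+1) - G i)^2
        - G 0 * (G 1 - G 0) + G (m+1) * (G (m+1) - G m) := by
  induction m with
  | zero => simp; ring
  | succ k ih =>
    rw [Finset.sum_Ico_succ_top (by omega : 1 ≤ k + 1), ih, Finset.sum_range_succ,
      Finset.sum_range_succ, Finset.sum_range_succ]
    simp only [Nat.add_sub_cancel]
    ring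

lemma abel_linear (u : ℕ → ℝ) (m : ℕ) :
    ∑ i ∈ Finset.Ico 1 (m+1), (i:ℝ) * (u i - u (i-1))
      = (m:ℝ) * u m - ∑ i ∈ Finset.range m, u i := by
  induction m with
  | zero => simp
  | succ k ih =>
    rw [Finset.sum_Ico_succ_top (by omega : 1 ≤ k + 1), ih, Finset.sum_range_succ]
    simp only [Nat.add_sub_cancel]
    push_cast
    ring

lemma telescope_sum (u : ℕ → ℝ) (m : ℕ) :
    ∑ i ∈ Finset.Ico 1 (m+1), (u i - u (i-1)) = u m - u 0 := by
  induction m with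
  | zero => simp
  | succ k ih =>
    rw [Finset.sum_Ico_succ_top (by omega : 1 ≤ k + 1), ih]
    simp only [Nat.add_sub_cancel]
    ring

set_option maxHeartbeats 4000000 in
theorem scheme3_long_time_behavior
    (M : ℕ) (hM : 2 ≤ M) (h τ : ℝ) (hh : h = 1 / (M : ℝ)) (hτ : 0 < τ)
    (f : ℕ → ℕ → ℝ) (j : ℕ → ℕ → ℝ)
    (hj : ∀ n i, j n i =
      -((((i : ℝ) + 1) * h * (1 - ((i : ℝ) + 1) * h)) * f n (i + 1)
          - ((i : ℝ) * h * (1 - (i : ℝ) * h)) * f n i) / h)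
    (hint : ∀ n, ∀ i, 1 ≤ i → i ≤ M - 1 →
      f (n + 1) i = f n i - (τ / h) * (j (n + 1) i - j (n + 1) (i - 1)))
    (hb0 : ∀ n, f (n + 1) 0 = f n 0 - (2 * τ / h) * j (n + 1) 0)
    (hbM : ∀ n, f (n + 1) M = f n M + (2 * τ / h) * j (n + 1) (M - 1))
    (P0 E0 : ℝ)
    (hP0 : P0 = h / 2 * f 0 0 + h / 2 * f 0 M + ∑ i ∈ Finset.Ico 1 M, f 0 i * h)
    (hE0 : E0 = h / 2 * ((M : ℝ) * h) * f 0 M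
        + ∑ i ∈ Finset.Ico 1 M, ((i : ℝ) * h) * f 0 i * h) :
    (∀ i, 1 ≤ i → i ≤ M - 1 → Tendsto (fun n => f n i) atTop (𝓝 0)) ∧
      Tendsto (fun n => h / 2 * f n M) atTop (𝓝 E0) ∧
      Tendsto (fun n => h / 2 * f n 0) atTop (𝓝 (P0 - E0)) := by
  obtain ⟨m, rfl⟩ : ∃ m, M = m + 2 := ⟨M - 2, by omega⟩
  simp only [show m + 2 - 1 = m + 1 from rfl] at hint hbM ⊢
  have hm0 : (0:ℝ) ≤ (m:ℝ) := Nat.cast_nonneg m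
  have hMR : (2:ℝ) ≤ (m:ℝ) + 2 := by linarith
  have hMpos : (0:ℝ) < (m:ℝ) + 2 := by linarith
  have hcast : ((m + 2 : ℕ) : ℝ) = (m:ℝ) + 2 := by push_cast; ring
  have hh0 : 0 < h := by rw [hh]; positivity
  have hhne : h ≠ 0 := ne_of_gt hh0
  have hMh : ((m:ℝ) + 2) * h = 1 := by rw [hh]; field_simp; exact hcast.symm
  have hhalf : h ≤ 1/2 := by
    rw [hh, hcast, div_le_div_iff₀ hMpos (by norm_num : (0:ℝ) < 2)]; linarith
  -- the diffusion coefficient and g = D f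
  obtain ⟨D, hDdef⟩ : ∃ D : ℕ → ℝ, D = fun i : ℕ => (i:ℝ) * h * (1 - (i:ℝ) * h) := ⟨_, rfl⟩
  obtain ⟨g, hgdef⟩ : ∃ g : ℕ → ℕ → ℝ, g = fun n i => D i * f n i := ⟨_, rfl⟩
  have hD0 : D 0 = 0 := by simp [hDdef]
  have hDM : D (m+2) = 0 := by
    simp only [hDdef, hcast]
    rw [hMh]; ring
  have hg0 : ∀ n, g n 0 = 0 := by intro n; simp [hgdef, hD0]
  have hgM : ∀ n, g n (m+2) = 0 := by intro n; simp [hgdef, hDM]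
  have hj' : ∀ n i, j n i = -(g n (i+1) - g n i) / h := by
    intro n i
    rw [hj]
    simp only [hgdef, hDdef]
    push_cast
    ring
  -- flux sums to zero
  have hjsum : ∀ n, ∑ i ∈ Finset.range (m+2), j n i = 0 := by
    intro n
    have : ∀ i, j n i = (g n i - g n (i+1)) / h := by
      intro i; rw [hj']; ring
    calc ∑ i ∈ Finset.range (m+2), j n i
        = (∑ i ∈ Finset.range (m+2), (g n i - g n (i+1))) / h := by
          rw [Finset.sum_div]; exact Finset.sum_congr rfl fun i _ => this i
      _ = 0 := by rw [Finset.sum_range_sub' (fun i => g n i), hg0, hgM]; simp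
  -- normalized flux q
  obtain ⟨q, hqdef⟩ : ∃ q : ℕ → ℕ → ℝ, q = fun n i => (τ / h) * j n i := ⟨_, rfl⟩
  have hq0 : ∀ n, f (n+1) 0 = f n 0 - 2 * q (n+1) 0 := by
    intro n; rw [hb0]; simp only [hqdef]; ring
  have hqM : ∀ n, f (n+1) (m+2) = f n (m+2) + 2 * q (n+1) (m+1) := by
    intro n; rw [hbM]; simp only [hqdef]; ring
  have hqint : ∀ n i, 1 ≤ i → i ≤ m + 1 →
      f (n+1) i = f n i - (q (n+1) i - q (n+1) (i-1)) := by
    intro n i h1 h2; rw [hint n i h1 h2]; simp only [hqdef]; ring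
  have hqsum : ∀ n, ∑ i ∈ Finset.range (m+2), q n i = 0 := by
    intro n
    simp only [hqdef]
    rw [← Finset.mul_sum, hjsum]; ring
  -- lower bound on D in the interior
  have hDlb : ∀ i, 1 ≤ i → i ≤ m + 1 → h * (1 - h) ≤ D i := by
    intro i h1 h2
    have hi1 : (1:ℝ) ≤ (i:ℝ) := by exact_mod_cast h1
    have hi2 : (i:ℝ) ≤ (m:ℝ) + 1 := by exact_mod_cast h2
    have hx1 : h ≤ (i:ℝ) * h := by nlinarith
    have hx2 : (i:ℝ) * h ≤ 1 - h := by nlinarith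
    simp only [hDdef]
    nlinarith [mul_nonneg (by linarith : (0:ℝ) ≤ (i:ℝ)*h - h)
      (by linarith : (0:ℝ) ≤ 1 - h - (i:ℝ)*h)]
  obtain ⟨c, hcdef⟩ : ∃ c : ℝ, c = τ / h^2 := ⟨_, rfl⟩
  have hc : 0 < c := by rw [hcdef]; positivity
  have hgrec : ∀ n i, 1 ≤ i → i ≤ m + 1 →
      f (n+1) i = f n i + c * (g (n+1) (i+1) - 2 * g (n+1) i + g (n+1) (i-1)) := by
    intro n i h1 h2
    obtain ⟨p, rfl⟩ : ∃ p, i = p + 1 := ⟨i - 1, by omega⟩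
    rw [hqint n (p+1) h1 h2]
    simp only [Nat.add_sub_cancel, hqdef, hcdef]
    rw [hj' (n+1) (p+1), hj' (n+1) p]
    field_simp
    ring
  obtain ⟨Q, hQdef⟩ : ∃ Q : ℕ → ℝ, Q = fun n => ∑ i ∈ Finset.Ico 1 (m+2), D i * (f n i)^2 := ⟨_, rfl⟩
  obtain ⟨α, hαdef⟩ : ∃ α : ℝ, α = h * (1 - h) := ⟨_, rfl⟩
  have hα : 0 < α := by rw [hαdef]; nlinarith
  have hDlbα : ∀ i, 1 ≤ i → i ≤ m + 1 → α ≤ D i := by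
    intro i a b; rw [hαdef]; exact hDlb i a b
  have hQnonneg : ∀ n, 0 ≤ Q n := by
    intro n
    simp only [hQdef]
    apply Finset.sum_nonneg
    intro i hi
    rw [Finset.mem_Ico] at hi
    have := hDlb i hi.1 (by omega)
    nlinarith [sq_nonneg (f n i)]
  obtain ⟨K, hKdef⟩ : ∃ K : ℝ, K = ((m:ℝ)+1)^2 := ⟨_, rfl⟩
  have hK : (0:ℝ) < K := by rw [hKdef]; positivity
  -- the key energy decay estimate
  have hdecay : ∀ n, Q (n+1) * (K + 2*c*α) ≤ Q n * K := by
    intro n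
    obtain ⟨S, hSdef⟩ : ∃ S : ℝ, S = ∑ i ∈ Finset.range (m+2), (g (n+1) (i+1) - g (n+1) i)^2 := ⟨_, rfl⟩
    have hS0 : 0 ≤ S := by rw [hSdef]; exact Finset.sum_nonneg fun i _ => sq_nonneg _
    have hid : Q (n+1) = (∑ i ∈ Finset.Ico 1 (m+2), g (n+1) i * f n i) - c * S := by
      have e1 : ∀ i ∈ Finset.Ico 1 (m+2), D i * (f (n+1) i)^2
          = g (n+1) i * f n i
            + c * (g (n+1) i * (g (n+1) (i+1) - 2*g (n+1) i + g (n+1) (i-1))) := by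
        intro i hi
        rw [Finset.mem_Ico] at hi
        have hb := hgrec n i hi.1 (by omega)
        calc D i * (f (n+1) i)^2 = (D i * f (n+1) i) * f (n+1) i := by ring
          _ = g (n+1) i * f (n+1) i := by simp only [hgdef]
          _ = g (n+1) i * (f n i
                + c * (g (n+1) (i+1) - 2*g (n+1) i + g (n+1) (i-1))) := by rw [hb]
          _ = g (n+1) i * f n i
                + c * (g (n+1) i * (g (n+1) (i+1) - 2*g (n+1) i + g (n+1) (i-1))) := by ring
      simp only [hQdef]
      rw [Finset.sum_congr rfl e1, Finset.sum_add_distrib, ← Finset.mul_sum,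
        abel_energy (fun i => g (n+1) i) (m+1)]
      simp only [hg0 (n+1), hgM (n+1)]
      rw [← hSdef]
      ring
    have hamgm : ∑ i ∈ Finset.Ico 1 (m+2), g (n+1) i * f n i ≤ (Q (n+1) + Q n) / 2 := by
      have e2 : ∀ i ∈ Finset.Ico 1 (m+2), g (n+1) i * f n i
          ≤ (D i * (f (n+1) i)^2 + D i * (f n i)^2) / 2 := by
        intro i hi
        rw [Finset.mem_Ico] at hi
        have hDi : (0:ℝ) ≤ D i := le_trans hα.le (hDlbα i hi.1 (by omega))
        simp only [hgdef]
        nlinarith [mul_nonneg hDi (sq_nonneg (f (n+1) i - f n i))]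
      calc ∑ i ∈ Finset.Ico 1 (m+2), g (n+1) i * f n i
          ≤ ∑ i ∈ Finset.Ico 1 (m+2), (D i * (f (n+1) i)^2 + D i * (f n i)^2) / 2 :=
            Finset.sum_le_sum e2
        _ = (Q (n+1) + Q n) / 2 := by
            simp only [hQdef]
            rw [← Finset.sum_div, Finset.sum_add_distrib]
    have hstep : Q (n+1) + 2*c*S ≤ Q n := by linarith
    have hGi : ∀ i ∈ Finset.Ico 1 (m+2), (g (n+1) i)^2 ≤ ((m:ℝ)+1) * S := by
      intro i hi
      rw [Finset.mem_Ico] at hi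
      have hGsum : g (n+1) i = ∑ k ∈ Finset.range i, (g (n+1) (k+1) - g (n+1) k) := by
        rw [Finset.sum_range_sub (fun k => g (n+1) k), hg0]; ring
      have hcard : ((Finset.range i).card : ℝ) ≤ (m:ℝ) + 1 := by
        rw [Finset.card_range]
        have h' : (i:ℝ) ≤ ((m+1:ℕ):ℝ) := Nat.cast_le.mpr (by omega)
        push_cast at h'
        linarith
      have hsub : ∑ k ∈ Finset.range i, (g (n+1) (k+1) - g (n+1) k)^2 ≤ S := by
        rw [hSdef]
        exact Finset.sum_le_sum_of_subset_of_nonneg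
          (Finset.range_subset_range.mpr (by omega)) (fun k _ _ => sq_nonneg _)
      calc (g (n+1) i)^2
          = (∑ k ∈ Finset.range i, (g (n+1) (k+1) - g (n+1) k))^2 := by rw [← hGsum]
        _ ≤ ((Finset.range i).card : ℝ)
              * ∑ k ∈ Finset.range i, (g (n+1) (k+1) - g (n+1) k)^2 :=
            sq_sum_le_card_mul_sum_sq
        _ ≤ ((m:ℝ)+1) * S := by
            apply mul_le_mul hcard hsub
              (Finset.sum_nonneg fun k _ => sq_nonneg _) (by positivity)
    have hpoin : α * Q (n+1) ≤ K * S := by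
      have e3 : ∀ i ∈ Finset.Ico 1 (m+2), α * (D i * (f (n+1) i)^2) ≤ ((m:ℝ)+1) * S := by
        intro i hi
        have hi' := hi
        rw [Finset.mem_Ico] at hi
        have hDi := hDlbα i hi.1 (by omega)
        have hDnn : (0:ℝ) ≤ D i := le_trans hα.le hDi
        have h1 : α * (D i * (f (n+1) i)^2) ≤ D i * (D i * (f (n+1) i)^2) :=
          mul_le_mul_of_nonneg_right hDi (mul_nonneg hDnn (sq_nonneg _))
        have h2 : D i * (D i * (f (n+1) i)^2) = (g (n+1) i)^2 := by
          simp only [hgdef]; ring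
        calc α * (D i * (f (n+1) i)^2) ≤ (g (n+1) i)^2 := by rw [← h2]; exact h1
          _ ≤ ((m:ℝ)+1) * S := hGi i hi'
      calc α * Q (n+1) = ∑ i ∈ Finset.Ico 1 (m+2), α * (D i * (f (n+1) i)^2) := by
            simp only [hQdef]
            rw [Finset.mul_sum]
        _ ≤ ∑ _i ∈ Finset.Ico 1 (m+2), ((m:ℝ)+1) * S := Finset.sum_le_sum e3
        _ = K * S := by
            rw [Finset.sum_const, Nat.card_Ico, hKdef]
            simp only [nsmul_eq_mul]
            push_cast
            ring
    nlinarith [mul_le_mul_of_nonneg_left hstep hK.le,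
      mul_le_mul_of_nonneg_left hpoin (by linarith : (0:ℝ) ≤ 2*c)]
  -- geometric decay of Q
  have hKc : (0:ℝ) < K + 2*c*α := by nlinarith
  have hr0 : (0:ℝ) ≤ K / (K + 2*c*α) := div_nonneg hK.le hKc.le
  have hr1 : K / (K + 2*c*α) < 1 := by
    rw [div_lt_one hKc]; nlinarith
  have hQgeo : ∀ n, Q n ≤ Q 0 * (K / (K + 2*c*α))^n := by
    intro n
    induction n with
    | zero => simp
    | succ k ih =>
      have h1 : Q (k+1) ≤ (K / (K + 2*c*α)) * Q k := by
        rw [div_mul_eq_mul_div, le_div_iff₀ hKc]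
        calc Q (k+1) * (K + 2*c*α) ≤ Q k * K := hdecay k
          _ = K * Q k := by ring
      calc Q (k+1) ≤ (K/(K+2*c*α)) * Q k := h1
        _ ≤ (K/(K+2*c*α)) * (Q 0 * (K/(K+2*c*α))^k) := mul_le_mul_of_nonneg_left ih hr0
        _ = Q 0 * (K/(K+2*c*α))^(k+1) := by ring
  have hQto : Tendsto Q atTop (𝓝 0) := by
    apply squeeze_zero hQnonneg hQgeo
    simpa using (tendsto_pow_atTop_nhds_zero_of_lt_one hr0 hr1).const_mul (Q 0)
  -- interior values tend to zero
  have hintto : ∀ i, 1 ≤ i → i ≤ m + 1 → Tendsto (fun n => f n i) atTop (𝓝 0) := by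
    intro i h1 h2
    have hDi := hDlbα i h1 h2
    have hDipos : (0:ℝ) < D i := lt_of_lt_of_le hα hDi
    have hb : ∀ n, ‖f n i‖ ≤ Real.sqrt (Q n / D i) := by
      intro n
      have hterm : D i * (f n i)^2 ≤ Q n := by
        simp only [hQdef]
        exact Finset.single_le_sum
          (f := fun k => D k * (f n k)^2)
          (fun k hk => by
            rw [Finset.mem_Ico] at hk
            exact mul_nonneg (le_trans hα.le (hDlbα k hk.1 (by omega))) (sq_nonneg _))
          (Finset.mem_Ico.mpr ⟨h1, by omega⟩)
      have hsq : (f n i)^2 ≤ Q n / D i := by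
        rw [le_div_iff₀ hDipos]; nlinarith
      calc ‖f n i‖ = Real.sqrt ((f n i)^2) := by
            rw [Real.sqrt_sq_eq_abs, Real.norm_eq_abs]
        _ ≤ Real.sqrt (Q n / D i) := Real.sqrt_le_sqrt hsq
    apply squeeze_zero_norm hb
    have h0 : Tendsto (fun n => Q n / D i) atTop (𝓝 0) := by
      simpa using hQto.div_const (D i)
    simpa using h0.sqrt
  -- conservation of discrete mass
  have hPcons : ∀ n, h/2 * f n 0 + h/2 * f n (m+2)
      + ∑ i ∈ Finset.Ico 1 (m+2), f n i * h = P0 := by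
    intro n
    induction n with
    | zero => exact hP0.symm
    | succ k ih =>
      have hs : ∀ i ∈ Finset.Ico 1 (m+2), f (k+1) i * h
          = f k i * h - h * (q (k+1) i - q (k+1) (i-1)) := by
        intro i hi
        rw [Finset.mem_Ico] at hi
        rw [hqint k i hi.1 (by omega)]
        ring
      rw [Finset.sum_congr rfl hs, Finset.sum_sub_distrib, ← Finset.mul_sum,
        telescope_sum (fun i => q (k+1) i) (m+1), hq0 k, hqM k]
      linear_combination ih
  -- conservation of discrete expectation
  have hEcons : ∀ n, h/2 * (((m+2:ℕ):ℝ) * h) * f n (m+2)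
      + ∑ i ∈ Finset.Ico 1 (m+2), ((i:ℝ) * h) * f n i * h = E0 := by
    intro n
    induction n with
    | zero => exact hE0.symm
    | succ k ih =>
      have hs : ∀ i ∈ Finset.Ico 1 (m+2), ((i:ℝ) * h) * f (k+1) i * h
          = ((i:ℝ) * h) * f k i * h - h^2 * ((i:ℝ) * (q (k+1) i - q (k+1) (i-1))) := by
        intro i hi
        rw [Finset.mem_Ico] at hi
        rw [hqint k i hi.1 (by omega)]
        ring
      rw [Finset.sum_congr rfl hs, Finset.sum_sub_distrib, ← Finset.mul_sum,
        abel_linear (fun i => q (k+1) i) (m+1), hqM k]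
      have hqs : ∑ i ∈ Finset.range (m+1), q (k+1) i = - q (k+1) (m+1) := by
        have h' := hqsum (k+1)
        rw [Finset.sum_range_succ] at h'
        linarith
      rw [hqs]
      push_cast at ih ⊢
      linear_combination ih
  -- assemble the limits
  have hMh' : ((m+2:ℕ):ℝ) * h = 1 := by rw [hcast]; exact hMh
  have hsumE : Tendsto (fun n => ∑ i ∈ Finset.Ico 1 (m+2), ((i:ℝ) * h) * f n i * h)
      atTop (𝓝 0) := by
    have h0 : (0:ℝ) = ∑ i ∈ Finset.Ico 1 (m+2), (0:ℝ) := by simp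
    rw [h0]
    apply tendsto_finset_sum
    intro i hi
    rw [Finset.mem_Ico] at hi
    have := hintto i hi.1 (by omega)
    simpa using (this.const_mul ((i:ℝ)*h)).mul_const h
  have hsumP : Tendsto (fun n => ∑ i ∈ Finset.Ico 1 (m+2), f n i * h)
      atTop (𝓝 0) := by
    have h0 : (0:ℝ) = ∑ i ∈ Finset.Ico 1 (m+2), (0:ℝ) := by simp
    rw [h0]
    apply tendsto_finset_sum
    intro i hi
    rw [Finset.mem_Ico] at hi
    have := hintto i hi.1 (by omega)
    simpa using this.mul_const h
  have hfM : Tendsto (fun n => h/2 * f n (m+2)) atTop (𝓝 E0) := by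
    have heq : ∀ n, h/2 * f n (m+2)
        = E0 - ∑ i ∈ Finset.Ico 1 (m+2), ((i:ℝ) * h) * f n i * h := by
      intro n
      linear_combination hEcons n - (h/2 * f n (m+2)) * hMh'
    refine Tendsto.congr (fun n => (heq n).symm) ?_
    simpa using tendsto_const_nhds.sub hsumE
  have hf0 : Tendsto (fun n => h/2 * f n 0) atTop (𝓝 (P0 - E0)) := by
    have heq : ∀ n, h/2 * f n 0
        = P0 - h/2 * f n (m+2) - ∑ i ∈ Finset.Ico 1 (m+2), f n i * h := by
      intro n
      linear_combination hPcons n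
    refine Tendsto.congr (fun n => (heq n).symm) ?_
    have h2 := Tendsto.sub (Tendsto.sub (tendsto_const_nhds (x := P0) (f := (atTop : Filter ℕ))) hfM) hsumP
    simpa using h2
  exact ⟨hintto, hfM, hf0⟩
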